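/- arXiv:0904.3374 — 3 statements merged into one kernel-verified Lean document; each statement's English description precedes it below -/
import Mathlib

section
/- In the commutative two-row diagram of abelian groups described in the context, s(B₀') ∩ i(ker α) = {0}: if b' ∈ B₀' and p ∈ P₀ with α(p) = 0 satisfy s(b') = i(p), then s(b') = i(p) = 0. -/
/-- `s(B₀) ∩ i(ker α) = 0`. -/
theorem s_image_inter_i_ker_alpha_trivial
    {B₁ C₁ P₀ B₀ C₀ B₁' C₁' P₀' B₀' C₀' : Type*}
    [AddCommGroup B₁] [AddCommGroup C₁] [AddCommGroup P₀] [AddCommGroup B₀]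
    [AddCommGroup C₀] [AddCommGroup B₁'] [AddCommGroup C₁'] [AddCommGroup P₀']
    [AddCommGroup B₀'] [AddCommGroup C₀']
    (π₁ : B₁ →+ C₁) (d : C₁ →+ P₀) (i : P₀ →+ B₀) (π₀ : B₀ →+ C₀)
    (π₁' : B₁' →+ C₁') (d' : C₁' →+ P₀') (i' : P₀' →+ B₀') (π₀' : B₀' →+ C₀')
    (lam₁ : B₁ →+ B₁') (β₁ : C₁ →+ C₁') (α : P₀ →+ P₀') (lam₀ : B₀ →+ B₀')
    (β₀ : C₀ →+ C₀')
    (hsq1 : ∀ b, β₁ (π₁ b) = π₁' (lam₁ b))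
    (hsq2 : ∀ c, α (d c) = d' (β₁ c))
    (hsq3 : ∀ p, lam₀ (i p) = i' (α p))
    (hsq4 : ∀ b, β₀ (π₀ b) = π₀' (lam₀ b))
    (hexC₁ : Function.Exact ⇑π₁ ⇑d)
    (hexP₀ : Function.Exact ⇑d ⇑i)
    (hexB₀ : Function.Exact ⇑i ⇑π₀)
    (hexC₁' : Function.Exact ⇑π₁' ⇑d')
    (hexP₀' : Function.Exact ⇑d' ⇑i')
    (hlam₁ : Function.Surjective lam₁)
    (hβ₁ : Function.Bijective β₁)
    (hβ₀ : Function.Injective β₀)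
    (s : B₀' →+ B₀) (hs : ∀ b', lam₀ (s b') = b') :
    ∀ (b' : B₀') (p : P₀), α p = 0 → s b' = i p → s b' = 0 ∧ i p = 0 := by
  intro b' p hp hsp
  have hb' : b' = 0 := by
    have := hs b'
    rw [hsp, hsq3, hp] at this
    simpa using this.symm
  subst hb'
  simp at hsp ⊢
  exact hsp.symm
end

section
/- In the commutative two-row diagram of abelian groups described in the context, B₀ = s(B₀') + i(ker α): every element of B₀ can be written as s(b') + i(p) with b' ∈ B₀' and p ∈ P₀ satisfying α(p) = 0. -/
/-- `B₀ = s(B₀) + i(ker α)`. -/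
theorem decomposition_with_ker_alpha
    {B₁ C₁ P₀ B₀ C₀ B₁' C₁' P₀' B₀' C₀' : Type*}
    [AddCommGroup B₁] [AddCommGroup C₁] [AddCommGroup P₀] [AddCommGroup B₀]
    [AddCommGroup C₀] [AddCommGroup B₁'] [AddCommGroup C₁'] [AddCommGroup P₀']
    [AddCommGroup B₀'] [AddCommGroup C₀']
    (π₁ : B₁ →+ C₁) (d : C₁ →+ P₀) (i : P₀ →+ B₀) (π₀ : B₀ →+ C₀)
    (π₁' : B₁' →+ C₁') (d' : C₁' →+ P₀') (i' : P₀' →+ B₀') (π₀' : B₀' →+ C₀')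
    (lam₁ : B₁ →+ B₁') (β₁ : C₁ →+ C₁') (α : P₀ →+ P₀') (lam₀ : B₀ →+ B₀')
    (β₀ : C₀ →+ C₀')
    (hsq1 : ∀ b, β₁ (π₁ b) = π₁' (lam₁ b))
    (hsq2 : ∀ c, α (d c) = d' (β₁ c))
    (hsq3 : ∀ p, lam₀ (i p) = i' (α p))
    (hsq4 : ∀ b, β₀ (π₀ b) = π₀' (lam₀ b))
    (hexC₁ : Function.Exact ⇑π₁ ⇑d)
    (hexP₀ : Function.Exact ⇑d ⇑i)
    (hexB₀ : Function.Exact ⇑i ⇑π₀)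
    (hexC₁' : Function.Exact ⇑π₁' ⇑d')
    (hexP₀' : Function.Exact ⇑d' ⇑i')
    (hlam₁ : Function.Surjective lam₁)
    (hβ₁ : Function.Bijective β₁)
    (hβ₀ : Function.Injective β₀)
    (s : B₀' →+ B₀) (hs : ∀ b', lam₀ (s b') = b') :
    ∀ b₀, ∃ (b' : B₀') (p : P₀), α p = 0 ∧ b₀ = s b' + i p := by
  intro b₀
  -- π₀(b₀ - s(lam₀ b₀)) = 0
  have h1 : π₀ (b₀ - s (lam₀ b₀)) = 0 := by
    apply hβ₀
    rw [hsq4, map_zero, map_sub, hs, sub_self, map_zero]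
  obtain ⟨p, hp⟩ := (hexB₀ _).mp h1
  have h2 : i' (α p) = 0 := by rw [← hsq3, hp, map_sub, hs, sub_self]
  obtain ⟨c', hc'⟩ := (hexP₀' _).mp h2
  obtain ⟨c, hc⟩ := hβ₁.2 c'
  refine ⟨lam₀ b₀, p - d c, ?_, ?_⟩
  · rw [map_sub, hsq2, hc, hc', sub_self]
  · have hi : i (d c) = 0 := hexP₀.apply_apply_eq_zero c
    rw [map_sub, hi, sub_zero, hp, add_sub_cancel]
end

section
/- In the commutative two-row diagram of abelian groups described in the context, the map B₀' × ker α → B₀ given by (b', p) ↦ s(b') + i(p) is an isomorphism of abelian groups; in particular B₀ is the internal direct sum of s(B₀') and i(ker α), so B₀ ≅ B₀' ⊕ ker α. -/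
/-- `(b', p) ↦ s b' + i p` is an isomorphism
`B₀ × ker α ≃+ B₀`. -/
theorem direct_sum_decomposition
    {B₁ C₁ P₀ B₀ C₀ B₁' C₁' P₀' B₀' C₀' : Type*}
    [AddCommGroup B₁] [AddCommGroup C₁] [AddCommGroup P₀] [AddCommGroup B₀]
    [AddCommGroup C₀] [AddCommGroup B₁'] [AddCommGroup C₁'] [AddCommGroup P₀']
    [AddCommGroup B₀'] [AddCommGroup C₀']
    (π₁ : B₁ →+ C₁) (d : C₁ →+ P₀) (i : P₀ →+ B₀) (π₀ : B₀ →+ C₀)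
    (π₁' : B₁' →+ C₁') (d' : C₁' →+ P₀') (i' : P₀' →+ B₀') (π₀' : B₀' →+ C₀')
    (lam₁ : B₁ →+ B₁') (β₁ : C₁ →+ C₁') (α : P₀ →+ P₀') (lam₀ : B₀ →+ B₀')
    (β₀ : C₀ →+ C₀')
    (hsq1 : ∀ b, β₁ (π₁ b) = π₁' (lam₁ b))
    (hsq2 : ∀ c, α (d c) = d' (β₁ c))
    (hsq3 : ∀ p, lam₀ (i p) = i' (α p))
    (hsq4 : ∀ b, β₀ (π₀ b) = π₀' (lam₀ b))
    (hexC₁ : Function.Exact ⇑π₁ ⇑d)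
    (hexP₀ : Function.Exact ⇑d ⇑i)
    (hexB₀ : Function.Exact ⇑i ⇑π₀)
    (hexC₁' : Function.Exact ⇑π₁' ⇑d')
    (hexP₀' : Function.Exact ⇑d' ⇑i')
    (hlam₁ : Function.Surjective lam₁)
    (hβ₁ : Function.Bijective β₁)
    (hβ₀ : Function.Injective β₀)
    (s : B₀' →+ B₀) (hs : ∀ b', lam₀ (s b') = b') :
    ∃ e : B₀' × α.ker ≃+ B₀,
      ∀ (b' : B₀') (p : α.ker), e (b', p) = s b' + i (p : P₀) := by
  let f : B₀' × α.ker →+ B₀ :=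
    (s.comp (AddMonoidHom.fst _ _)) +
      ((i.comp α.ker.subtype).comp (AddMonoidHom.snd _ _))
  have hf : ∀ (b' : B₀') (p : α.ker), f (b', p) = s b' + i (p : P₀) :=
    fun _ _ => rfl
  have hinj : Function.Injective f := by
    rw [injective_iff_map_eq_zero]
    rintro ⟨b', p⟩ h
    rw [hf] at h
    have hpker : α (p : P₀) = 0 := p.2
    have hb' : b' = 0 := by
      have h2 := congrArg lam₀ h
      simpa [map_add, hs, hsq3, hpker] using h2
    rw [hb', map_zero, zero_add] at h
    -- i p = 0, so p ∈ range d
    obtain ⟨c, hc⟩ := (hexP₀ (p : P₀)).mp h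
    have hdc : d' (β₁ c) = 0 := by
      rw [← hsq2, hc, hpker]
    obtain ⟨b₁', hb₁'⟩ := (hexC₁' (β₁ c)).mp hdc
    obtain ⟨b₁, rfl⟩ := hlam₁ b₁'
    have hcπ : π₁ b₁ = c := hβ₁.1 (by rw [hsq1, hb₁'])
    have hp0 : (p : P₀) = 0 := by
      rw [← hc, ← hcπ, hexC₁.apply_apply_eq_zero]
    ext
    · simp [hb']
    · simp [hp0]
  have hsurj : Function.Surjective f := by
    intro b
    have hπ₀ : π₀ (b - s (lam₀ b)) = 0 := by
      apply hβ₀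
      rw [map_zero, hsq4, map_sub, hs, sub_self, map_zero]
    obtain ⟨p, hp⟩ := (hexB₀ (b - s (lam₀ b))).mp hπ₀
    have hαp : i' (α p) = 0 := by
      rw [← hsq3, hp, map_sub, hs, sub_self]
    obtain ⟨c', hc'⟩ := (hexP₀' (α p)).mp hαp
    obtain ⟨c, rfl⟩ := hβ₁.2 c'
    have hq : α (p - d c) = 0 := by
      rw [map_sub, hsq2, hc', sub_self]
    refine ⟨(lam₀ b, ⟨p - d c, hq⟩), ?_⟩
    rw [hf]
    have : i (p - d c) = b - s (lam₀ b) := by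
      rw [map_sub, hexP₀.apply_apply_eq_zero, sub_zero, hp]
    rw [this]
    abel
  exact ⟨AddEquiv.ofBijective f ⟨hinj, hsurj⟩, hf⟩
end
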